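/- arXiv:1903.07346 — 2 statements merged into one kernel-verified Lean document; each statement's English description precedes it below -/
import Mathlib

section
/- The s-th factorial moment of the number of adjacent equalities S_{n,k} in a uniformly random k-multiset of {1,...,n} is E[S_{n,k}(S_{n,k}-1)···(S_{n,k}-s+1)] = (k)_s · (k-1)_s / (n+k-1)_s, where (x)_s denotes the falling factorial. -/
/-- The set of weakly decreasing `k`-tuples with entries in `{1,...,n}`. -/
def multisetTuples (n k : ℕ) : Finset (Fin k → ℕ) :=
  (Fintype.piFinset fun _ : Fin k => Finset.Icc 1 n).filter
    fun ℓ => ∀ i j : Fin k, i ≤ j → ℓ j ≤ ℓ i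

/-- The number of adjacent equalities `ℓ_j = ℓ_{j+1}` in a tuple. -/
def sigmaEq {k : ℕ} (ℓ : Fin k → ℕ) : ℕ :=
  (Finset.univ.filter fun p : Fin k × Fin k =>
    (p.2 : ℕ) = (p.1 : ℕ) + 1 ∧ ℓ p.1 = ℓ p.2).card

lemma mem_multisetTuples {n m : ℕ} {ℓ : Fin m → ℕ} :
    ℓ ∈ multisetTuples n m ↔ (∀ i, 1 ≤ ℓ i ∧ ℓ i ≤ n) ∧ ∀ i j : Fin m, i ≤ j → ℓ j ≤ ℓ i := by
  simp [multisetTuples, Fintype.mem_piFinset, Finset.mem_Icc]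

/-- gap lemma for strict mono maps out of `Fin m` into `ℕ`. -/
lemma strictMono_gap {m : ℕ} {f : Fin m → ℕ} (hf : StrictMono f) :
    ∀ (d : ℕ) (a b : Fin m), (b : ℕ) = (a : ℕ) + d → f a + d ≤ f b := by
  intro d
  induction d with
  | zero => intro a b h; have : b = a := Fin.ext (by omega); simp [this]
  | succ d ih =>
    intro a b h
    have hb' : (a : ℕ) + d < m := by have := b.isLt; omega
    have h1 := ih a ⟨(a : ℕ) + d, hb'⟩ rfl
    have h2 : f ⟨(a : ℕ) + d, hb'⟩ < f b := hf (by simp [Fin.lt_def]; omega)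
    omega

lemma strictMono_ge {m : ℕ} {f : Fin m → ℕ} (hf : StrictMono f) (a : Fin m) :
    (a : ℕ) ≤ f a := by
  have hm : 0 < m := a.pos
  have := strictMono_gap hf (a : ℕ) ⟨0, hm⟩ a (by simp)
  omega

lemma card_multisetTuples (n m : ℕ) (hn : 1 ≤ n) :
    (multisetTuples n m).card = (n + m - 1).choose m := by
  have key : (multisetTuples n m).card
      = ((Finset.range (n + m - 1)).powersetCard m).card := by
    apply Finset.card_bij
      (fun ℓ _ => Finset.image (fun j : Fin m => ℓ (Fin.rev j) + (j : ℕ) - 1) Finset.univ)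
    · -- maps into
      intro ℓ hℓ
      rw [mem_multisetTuples] at hℓ
      obtain ⟨hval, hmono⟩ := hℓ
      have hg : StrictMono (fun j : Fin m => ℓ (Fin.rev j) + (j : ℕ) - 1) := by
        intro j j' hjj
        have h1 : Fin.rev j' ≤ Fin.rev j := by
          simp [Fin.le_def, Fin.val_rev]; omega
        have h2 := hmono _ _ h1
        have := (hval (Fin.rev j)).1
        have := (hval (Fin.rev j')).1
        simp only []
        have : (j : ℕ) < (j' : ℕ) := hjj
        omega
      rw [Finset.mem_powersetCard]
      constructor
      · intro x hx
        simp only [Finset.mem_image, Finset.mem_univ, true_and] at hx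
        obtain ⟨j, hj⟩ := hx
        have := (hval (Fin.rev j)).1
        have := (hval (Fin.rev j)).2
        have := j.isLt
        rw [Finset.mem_range]
        omega
      · rw [Finset.card_image_of_injective _ hg.injective, Finset.card_univ, Fintype.card_fin]
    · -- injective
      intro ℓ hℓ ℓ' hℓ' heq
      rw [mem_multisetTuples] at hℓ hℓ'
      have hg : StrictMono (fun j : Fin m => ℓ (Fin.rev j) + (j : ℕ) - 1) := by
        intro j j' hjj
        have h1 : Fin.rev j' ≤ Fin.rev j := by simp [Fin.le_def, Fin.val_rev]; omega
        have h2 := hℓ.2 _ _ h1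
        have := (hℓ.1 (Fin.rev j)).1
        have := (hℓ.1 (Fin.rev j')).1
        have : (j : ℕ) < (j' : ℕ) := hjj
        simp only []
        omega
      have hg' : StrictMono (fun j : Fin m => ℓ' (Fin.rev j) + (j : ℕ) - 1) := by
        intro j j' hjj
        have h1 : Fin.rev j' ≤ Fin.rev j := by simp [Fin.le_def, Fin.val_rev]; omega
        have h2 := hℓ'.2 _ _ h1
        have := (hℓ'.1 (Fin.rev j)).1
        have := (hℓ'.1 (Fin.rev j')).1
        have : (j : ℕ) < (j' : ℕ) := hjj
        simp only []
        omega
      have heq' : Finset.image (fun j : Fin m => ℓ (Fin.rev j) + (j : ℕ) - 1) Finset.univ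
          = Finset.image (fun j : Fin m => ℓ' (Fin.rev j) + (j : ℕ) - 1) Finset.univ := by
        simpa using heq
      have hcard : (Finset.image (fun j : Fin m => ℓ (Fin.rev j) + (j : ℕ) - 1)
          Finset.univ).card = m := by
        rw [Finset.card_image_of_injective _ hg.injective, Finset.card_univ, Fintype.card_fin]
      have e1 : (fun j : Fin m => ℓ (Fin.rev j) + (j : ℕ) - 1) = _root_.Finset.orderEmbOfFin _ hcard :=
        Finset.orderEmbOfFin_unique hcard
          (fun j => Finset.mem_image_of_mem _ (Finset.mem_univ j)) hg
      have e2 : (fun j : Fin m => ℓ' (Fin.rev j) + (j : ℕ) - 1) = _root_.Finset.orderEmbOfFin _ hcard :=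
        Finset.orderEmbOfFin_unique hcard
          (fun j => by rw [heq']; exact Finset.mem_image_of_mem _ (Finset.mem_univ j)) hg'
      funext i
      have h3 := congrFun (e1.trans e2.symm) (Fin.rev i)
      simp only [Fin.rev_rev] at h3
      have := (hℓ.1 i).1
      have := (hℓ'.1 i).1
      omega
    · -- surjective
      intro S hS
      rw [Finset.mem_powersetCard] at hS
      obtain ⟨hsub, hcard⟩ := hS
      set e : Fin m → ℕ := fun j => S.orderEmbOfFin hcard j with he
      have hmono : StrictMono e := (S.orderEmbOfFin hcard).strictMono
      have hmem : ∀ j, e j ∈ Finset.range (n + m - 1) :=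
        fun j => hsub (Finset.orderEmbOfFin_mem S hcard j)
      have hlow : ∀ j : Fin m, (j : ℕ) ≤ e j := fun j => strictMono_ge hmono j
      have hupp : ∀ j : Fin m, e j ≤ n - 1 + (j : ℕ) := by
        intro j
        have hm : 0 < m := j.pos
        have hlast := strictMono_gap hmono (m - 1 - (j : ℕ)) j ⟨m - 1, by omega⟩
          (by simp; have := j.isLt; omega)
        have := hmem ⟨m - 1, by omega⟩
        rw [Finset.mem_range] at this
        have := j.isLt
        omega
      refine ⟨fun i => e (Fin.rev i) + 1 - (Fin.rev i : ℕ), ?_, ?_⟩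
      · rw [mem_multisetTuples]
        constructor
        · intro i
          have := hlow (Fin.rev i)
          have := hupp (Fin.rev i)
          constructor <;> omega
        · intro i j hij
          have h1 : (Fin.rev j : ℕ) ≤ (Fin.rev i : ℕ) := by
            simp [Fin.val_rev]; have := j.isLt; have : (i:ℕ) ≤ j := hij; omega
          have h2 := strictMono_gap hmono ((Fin.rev i : ℕ) - (Fin.rev j : ℕ))
            (Fin.rev j) (Fin.rev i) (by omega)
          have := hlow (Fin.rev j)
          omega
      · have hval : ∀ j : Fin m,
            (fun i => e (Fin.rev i) + 1 - (Fin.rev i : ℕ)) (Fin.rev j) + (j : ℕ) - 1 = e j := by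
          intro j
          simp only [Fin.rev_rev]
          have := hlow j
          omega
        rw [show (fun j : Fin m =>
            (fun i => e (Fin.rev i) + 1 - (Fin.rev i : ℕ)) (Fin.rev j) + (j : ℕ) - 1)
            = e from funext hval]
        ext x
        simp only [Finset.mem_image, Finset.mem_univ, true_and]
        constructor
        · rintro ⟨j, rfl⟩; exact Finset.orderEmbOfFin_mem S hcard j
        · intro hx
          have : x ∈ Set.range (S.orderEmbOfFin hcard) := by
            rw [Finset.range_orderEmbOfFin]; exact hx
          obtain ⟨j, hj⟩ := this
          exact ⟨j, hj⟩
  rw [key, Finset.card_powersetCard, Finset.card_range]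

def cJ {k : ℕ} (J : Finset (Fin k)) (i : Fin k) : ℕ :=
  (J.filter fun j : Fin k => (j : ℕ) < (i : ℕ)).card

lemma cJ_le {k : ℕ} (J : Finset (Fin k)) (i : Fin k) : cJ J i ≤ (i : ℕ) := by
  have h := Finset.card_le_card_of_injOn (s := J.filter fun j : Fin k => (j : ℕ) < (i : ℕ))
    (t := Finset.range (i : ℕ)) (fun j : Fin k => (j : ℕ))
    (fun j hj => Finset.mem_range.mpr (Finset.mem_filter.mp hj).2)
    (fun a _ b _ hab => Fin.ext hab)
  rw [Finset.card_range] at h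
  exact h

lemma cJ_mono {k : ℕ} (J : Finset (Fin k)) {i i' : Fin k} (h : (i : ℕ) ≤ (i' : ℕ)) :
    cJ J i ≤ cJ J i' := by
  apply Finset.card_le_card
  intro j hj
  simp only [Finset.mem_filter] at hj ⊢
  exact ⟨hj.1, by omega⟩

lemma cJ_mono2 {k : ℕ} (J : Finset (Fin k)) {i i' : Fin k} (h : (i : ℕ) ≤ (i' : ℕ)) :
    cJ J i' ≤ cJ J i + ((i' : ℕ) - (i : ℕ)) := by
  have hsub : J.filter (fun j : Fin k => (j : ℕ) < (i' : ℕ)) ⊆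
      J.filter (fun j : Fin k => (j : ℕ) < (i : ℕ)) ∪
        J.filter (fun j : Fin k => (i : ℕ) ≤ (j : ℕ) ∧ (j : ℕ) < (i' : ℕ)) := by
    intro j hj
    simp only [Finset.mem_filter, Finset.mem_union] at hj ⊢
    obtain ⟨h1, h2⟩ := hj
    by_cases hc : (j : ℕ) < (i : ℕ)
    · exact Or.inl ⟨h1, hc⟩
    · exact Or.inr ⟨h1, by omega, h2⟩
  have h1 := Finset.card_le_card hsub
  have h2 := Finset.card_union_le (J.filter fun j : Fin k => (j : ℕ) < (i : ℕ))
    (J.filter fun j : Fin k => (i : ℕ) ≤ (j : ℕ) ∧ (j : ℕ) < (i' : ℕ))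
  have h3 : (J.filter fun j : Fin k => (i : ℕ) ≤ (j : ℕ) ∧ (j : ℕ) < (i' : ℕ)).card
      ≤ (i' : ℕ) - (i : ℕ) := by
    have h := Finset.card_le_card_of_injOn
      (s := J.filter fun j : Fin k => (i : ℕ) ≤ (j : ℕ) ∧ (j : ℕ) < (i' : ℕ))
      (t := Finset.Ico (i : ℕ) (i' : ℕ))
      (fun j : Fin k => (j : ℕ))
      (fun j hj => Finset.mem_Ico.mpr (Finset.mem_filter.mp hj).2)
      (fun a _ b _ hab => Fin.ext hab)
    rw [Nat.card_Ico] at h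
    exact h
  unfold cJ at *
  omega

lemma cJ_succ {k : ℕ} (J : Finset (Fin k)) {i i' : Fin k} (h : (i' : ℕ) = (i : ℕ) + 1) :
    cJ J i' = cJ J i + (if i ∈ J then 1 else 0) := by
  have hsplit : J.filter (fun j : Fin k => (j : ℕ) < (i' : ℕ))
      = J.filter (fun j : Fin k => (j : ℕ) < (i : ℕ)) ∪ J.filter (fun j : Fin k => j = i) := by
    ext j
    simp only [Finset.mem_filter, Finset.mem_union, Fin.ext_iff, ← and_or_left]
    exact and_congr_right fun _ => by omega
  have hdisj : Disjoint (J.filter fun j : Fin k => (j : ℕ) < (i : ℕ)) (J.filter fun j : Fin k => j = i) := by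
    rw [Finset.disjoint_left]
    intro j hj hj'
    simp only [Finset.mem_filter, Fin.ext_iff] at hj hj'
    omega
  rw [cJ, hsplit, Finset.card_union_of_disjoint hdisj, Finset.filter_eq']
  split_ifs <;> simp [cJ]

def bJ {k : ℕ} (J : Finset (Fin k)) (i : Fin k) : ℕ := (i : ℕ) - cJ J i

lemma bJ_mono {k : ℕ} (J : Finset (Fin k)) {i i' : Fin k} (h : (i : ℕ) ≤ (i' : ℕ)) :
    bJ J i ≤ bJ J i' := by
  have h1 := cJ_mono2 J h
  have h2 := cJ_le J i
  have h3 := cJ_le J i'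
  unfold bJ
  omega

lemma bJ_surj {k : ℕ} (J : Finset (Fin k)) :
    ∀ (i : Fin k) (t : ℕ), t ≤ bJ J i → ∃ i' : Fin k, (i' : ℕ) ≤ (i : ℕ) ∧ bJ J i' = t := by
  have key : ∀ (v : ℕ) (hv : v < k) (t : ℕ), t ≤ bJ J ⟨v, hv⟩ →
      ∃ i' : Fin k, (i' : ℕ) ≤ v ∧ bJ J i' = t := by
    intro v
    induction v with
    | zero =>
      intro hv t ht
      have : bJ J ⟨0, hv⟩ = 0 := by unfold bJ; simp
      exact ⟨⟨0, hv⟩, le_refl _, by omega⟩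
    | succ v ih =>
      intro hv t ht
      have hv' : v < k := by omega
      by_cases hc : t ≤ bJ J ⟨v, hv'⟩
      · obtain ⟨i', h1, h2⟩ := ih hv' t hc
        exact ⟨i', by omega, h2⟩
      · refine ⟨⟨v + 1, hv⟩, le_refl _, ?_⟩
        have hstep := cJ_succ J (i := ⟨v, hv'⟩) (i' := ⟨v + 1, hv⟩) rfl
        have h2 := cJ_le J ⟨v, hv'⟩
        unfold bJ at *
        simp only at *
        split_ifs at hstep <;> omega
  exact fun i t ht => key (i : ℕ) i.isLt t (by convert ht)

theorem constrained_card (n k s : ℕ) (hn : 1 ≤ n) (hk : 1 ≤ k)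
    (A : Finset (Fin k × Fin k))
    (hA : ∀ p ∈ A, (p.2 : ℕ) = (p.1 : ℕ) + 1) (hAcard : A.card = s) :
    ((multisetTuples n k).filter fun ℓ => ∀ p ∈ A, ℓ p.1 = ℓ p.2).card
      = (multisetTuples n (k - s)).card := by
  classical
  set J : Finset (Fin k) := A.image Prod.fst with hJdef
  have hJcard : J.card = s := by
    rw [hJdef, Finset.card_image_of_injOn, hAcard]
    intro p hp q hq hpq
    have h1 := hA p hp
    have h2 := hA q hq
    exact Prod.ext hpq (Fin.ext (by rw [h1, h2, hpq]))
  have hJlt : ∀ j ∈ J, (j : ℕ) + 1 < k := by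
    intro j hj
    rw [hJdef, Finset.mem_image] at hj
    obtain ⟨p, hp, rfl⟩ := hj
    have := hA p hp
    have := p.2.isLt
    omega
  have hks : s ≤ k - 1 := by
    have h := Finset.card_le_card_of_injOn (s := J) (t := Finset.range (k - 1))
      (fun j : Fin k => (j : ℕ))
      (fun j hj => Finset.mem_range.mpr (show (j : ℕ) < k - 1 by have := hJlt j hj; omega))
      (fun a _ b _ hab => Fin.ext hab)
    rw [hJcard, Finset.card_range] at h
    exact h
  have hlast : (k - 1 : ℕ) < k := by omega
  have hclast : cJ J ⟨k - 1, hlast⟩ = s := by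
    rw [cJ]
    have : J.filter (fun j : Fin k => (j : ℕ) < ((⟨k - 1, hlast⟩ : Fin k) : ℕ)) = J := by
      apply Finset.filter_true_of_mem
      intro j hj
      have := hJlt j hj
      simp only
      omega
    rw [this, hJcard]
  have hblast : bJ J ⟨k - 1, hlast⟩ = k - 1 - s := by
    rw [bJ, hclast]
  have hblt : ∀ i : Fin k, bJ J i < k - s := by
    intro i
    have hi := i.isLt
    have h1 : bJ J i ≤ bJ J ⟨k - 1, hlast⟩ := bJ_mono J (by simp only [Fin.val_mk]; omega)
    omega
  -- definition of u
  have hne : ∀ t : Fin (k - s), (Finset.univ.filter fun i : Fin k => bJ J i = (t : ℕ)).Nonempty := by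
    intro t
    obtain ⟨i', _, h2⟩ := bJ_surj J ⟨k - 1, hlast⟩ (t : ℕ) (by have := t.isLt; omega)
    exact ⟨i', by simp [h2]⟩
  set u : Fin (k - s) → Fin k := fun t =>
    (Finset.univ.filter fun i : Fin k => bJ J i = (t : ℕ)).min' (hne t) with hudef
  have hu : ∀ t, bJ J (u t) = (t : ℕ) := by
    intro t
    have := Finset.min'_mem _ (hne t)
    rw [Finset.mem_filter] at this
    exact this.2
  have humin : ∀ (t : Fin (k - s)) (i : Fin k), bJ J i = (t : ℕ) → u t ≤ i := by
    intro t i hi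
    exact Finset.min'_le _ _ (by simp [hi])
  have humono : ∀ t t' : Fin (k - s), t ≤ t' → u t ≤ u t' := by
    intro t t' htt
    obtain ⟨i', h1, h2⟩ := bJ_surj J (u t') (t : ℕ) (by rw [hu t']; exact htt)
    exact le_trans (humin t i' h2) (Fin.le_def.mpr h1)
  -- propagation
  have hprop : ∀ ℓ : Fin k → ℕ, (∀ p ∈ A, ℓ p.1 = ℓ p.2) →
      ∀ i₁ i₂ : Fin k, (i₁ : ℕ) ≤ (i₂ : ℕ) → bJ J i₁ = bJ J i₂ → ℓ i₁ = ℓ i₂ := by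
    intro ℓ hℓ
    have key : ∀ (d : ℕ) (i₁ i₂ : Fin k), (i₂ : ℕ) = (i₁ : ℕ) + d →
        bJ J i₁ = bJ J i₂ → ℓ i₁ = ℓ i₂ := by
      intro d
      induction d with
      | zero => intro i₁ i₂ h _; rw [Fin.ext (by omega : (i₁ : ℕ) = (i₂ : ℕ))]
      | succ d ih =>
        intro i₁ i₂ h hb
        have hi' : (i₁ : ℕ) + d < k := by have := i₂.isLt; omega
        set i' : Fin k := ⟨(i₁ : ℕ) + d, hi'⟩ with hi'def
        have hb1 : bJ J i₁ ≤ bJ J i' := bJ_mono J (by simp [hi'def])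
        have hb2 : bJ J i' ≤ bJ J i₂ := bJ_mono J (by simp [hi'def]; omega)
        have hbeq : bJ J i₁ = bJ J i' := by omega
        have h1 : ℓ i₁ = ℓ i' := ih i₁ i' rfl hbeq
        -- step from i' to i₂
        have hstep := cJ_succ J (i := i') (i' := i₂) (by simp only [hi'def, Fin.val_mk]; omega)
        have hcle := cJ_le J i'
        have hmem : i' ∈ J := by
          by_contra hcon
          rw [if_neg hcon] at hstep
          unfold bJ at hb hbeq
          simp only [hi'def, Fin.val_mk] at *
          omega
        have : ∃ p ∈ A, p.1 = i' := by
          have := hmem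
          rw [hJdef, Finset.mem_image] at this
          obtain ⟨p, hp, hp1⟩ := this
          exact ⟨p, hp, hp1⟩
        obtain ⟨p, hp, hp1⟩ := this
        have hp2 : p.2 = i₂ := by
          have := hA p hp
          apply Fin.ext
          rw [this, hp1]
          simp only [hi'def, Fin.val_mk]
          omega
        have h2 : ℓ i' = ℓ i₂ := by rw [← hp1, ← hp2]; exact hℓ p hp
        rw [h1, h2]
    intro i₁ i₂ h hb
    exact key ((i₂ : ℕ) - (i₁ : ℕ)) i₁ i₂ (by omega) hb
  -- the bijection
  apply Finset.card_bij (fun ℓ _ => fun t : Fin (k - s) => ℓ (u t))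
  · intro ℓ hℓ
    rw [Finset.mem_filter, mem_multisetTuples] at hℓ
    rw [mem_multisetTuples]
    exact ⟨fun t => hℓ.1.1 (u t), fun t t' htt => hℓ.1.2 _ _ (humono t t' htt)⟩
  · intro ℓ hℓ ℓ' hℓ' heq
    rw [Finset.mem_filter] at hℓ hℓ'
    funext i
    have hbi : bJ J i < k - s := hblt i
    have h1 : ℓ (u ⟨bJ J i, hbi⟩) = ℓ i := by
      apply hprop ℓ hℓ.2
      · exact humin ⟨bJ J i, hbi⟩ i rfl
      · rw [hu]
    have h2 : ℓ' (u ⟨bJ J i, hbi⟩) = ℓ' i := by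
      apply hprop ℓ' hℓ'.2
      · exact humin ⟨bJ J i, hbi⟩ i rfl
      · rw [hu]
    have h3 := congrFun heq ⟨bJ J i, hbi⟩
    rw [← h1, ← h2, h3]
  · intro m hm
    rw [mem_multisetTuples] at hm
    refine ⟨fun i => m ⟨bJ J i, hblt i⟩, ?_, ?_⟩
    · rw [Finset.mem_filter, mem_multisetTuples]
      refine ⟨⟨fun i => hm.1 _, fun i j hij => hm.2 _ _ ?_⟩, ?_⟩
      · exact bJ_mono J hij
      · intro p hp
        have hmem : p.1 ∈ J := by
          rw [hJdef, Finset.mem_image]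
          exact ⟨p, hp, rfl⟩
        have hstep := cJ_succ J (i := p.1) (i' := p.2) (hA p hp)
        rw [if_pos hmem] at hstep
        have hcle := cJ_le J p.1
        have hbeq : bJ J p.1 = bJ J p.2 := by
          unfold bJ
          rw [hstep, hA p hp]
          omega
        exact congrArg m (Fin.ext hbeq)
    · funext t
      exact congrArg m (Fin.ext (by simp [hu]))

lemma card_pairs (k : ℕ) :
    ((Finset.univ : Finset (Fin k × Fin k)).filter
      fun p => (p.2 : ℕ) = (p.1 : ℕ) + 1).card = k - 1 := by
  have : ((Finset.univ : Finset (Fin k × Fin k)).filter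
      fun p => (p.2 : ℕ) = (p.1 : ℕ) + 1).card = (Finset.range (k - 1)).card := by
    apply Finset.card_bij (fun p _ => (p.1 : ℕ))
    · intro p hp
      rw [Finset.mem_filter] at hp
      rw [Finset.mem_range]
      have := p.2.isLt
      omega
    · intro p hp q hq hpq
      rw [Finset.mem_filter] at hp hq
      exact Prod.ext (Fin.ext hpq) (Fin.ext (by omega))
    · intro j hj
      rw [Finset.mem_range] at hj
      exact ⟨(⟨j, by omega⟩, ⟨j + 1, by omega⟩), by simp [Finset.mem_filter], rfl⟩
  rw [this, Finset.card_range]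

lemma sum_descFactorial (n k s : ℕ) (hn : 1 ≤ n) (hk : 1 ≤ k) :
    ∑ ℓ ∈ multisetTuples n k, (sigmaEq ℓ).descFactorial s
      = s.factorial * ((k - 1).choose s * (n + (k - s) - 1).choose (k - s)) := by
  classical
  set P : Finset (Fin k × Fin k) :=
    Finset.univ.filter (fun p => (p.2 : ℕ) = (p.1 : ℕ) + 1) with hPdef
  have hE : ∀ ℓ : Fin k → ℕ,
      (Finset.univ.filter fun p : Fin k × Fin k =>
        (p.2 : ℕ) = (p.1 : ℕ) + 1 ∧ ℓ p.1 = ℓ p.2)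
      = P.filter (fun p => ℓ p.1 = ℓ p.2) := by
    intro ℓ
    rw [hPdef, Finset.filter_filter]
  have e2 : ∀ ℓ : Fin k → ℕ,
      Finset.powersetCard s (P.filter (fun p => ℓ p.1 = ℓ p.2))
        = (Finset.powersetCard s P).filter (fun A => ∀ p ∈ A, ℓ p.1 = ℓ p.2) := by
    intro ℓ
    ext A
    simp only [Finset.mem_powersetCard, Finset.mem_filter]
    constructor
    · intro ⟨h1, h2⟩
      refine ⟨⟨fun p hp => (Finset.mem_filter.mp (h1 hp)).1, h2⟩,
        fun p hp => (Finset.mem_filter.mp (h1 hp)).2⟩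
    · intro ⟨⟨h1, h2⟩, h3⟩
      exact ⟨fun p hp => Finset.mem_filter.mpr ⟨h1 hp, h3 p hp⟩, h2⟩
  calc ∑ ℓ ∈ multisetTuples n k, (sigmaEq ℓ).descFactorial s
      = ∑ ℓ ∈ multisetTuples n k, s.factorial *
          ((Finset.powersetCard s P).filter (fun A => ∀ p ∈ A, ℓ p.1 = ℓ p.2)).card := by
        apply Finset.sum_congr rfl
        intro ℓ _
        rw [sigmaEq, Nat.descFactorial_eq_factorial_mul_choose, ← Finset.card_powersetCard,
          hE, e2]
    _ = s.factorial * ∑ A ∈ Finset.powersetCard s P,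
          ((multisetTuples n k).filter fun ℓ => ∀ p ∈ A, ℓ p.1 = ℓ p.2).card := by
        rw [← Finset.mul_sum]
        congr 1
        have hcf : ∀ ℓ : Fin k → ℕ,
            ((Finset.powersetCard s P).filter (fun A => ∀ p ∈ A, ℓ p.1 = ℓ p.2)).card
              = ∑ A ∈ Finset.powersetCard s P,
                  if (∀ p ∈ A, ℓ p.1 = ℓ p.2) then 1 else 0 :=
          fun ℓ => Finset.card_filter _ _
        rw [Finset.sum_congr rfl (fun ℓ _ => hcf ℓ), Finset.sum_comm]
        apply Finset.sum_congr rfl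
        intro A _
        rw [Finset.card_filter]
    _ = s.factorial * ∑ A ∈ Finset.powersetCard s P,
          (n + (k - s) - 1).choose (k - s) := by
        congr 1
        apply Finset.sum_congr rfl
        intro A hA
        rw [Finset.mem_powersetCard] at hA
        have hsub : ∀ p ∈ A, (p.2 : ℕ) = (p.1 : ℕ) + 1 := by
          intro p hp
          have := hA.1 hp
          rw [hPdef, Finset.mem_filter] at this
          exact this.2
        rw [constrained_card n k s hn hk A hsub hA.2, card_multisetTuples _ _ hn]
    _ = s.factorial * ((k - 1).choose s * (n + (k - s) - 1).choose (k - s)) := by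
        rw [Finset.sum_const, Finset.card_powersetCard, hPdef, card_pairs, smul_eq_mul]

theorem sigma_factorial_moments (n k s : ℕ) (hn : 1 ≤ n) (hk : 1 ≤ k) (hs : 1 ≤ s) :
    (∑ ℓ ∈ multisetTuples n k, ((sigmaEq ℓ).descFactorial s : ℝ)) /
        ((n + k - 1).choose k : ℝ) =
      (k.descFactorial s : ℝ) * ((k - 1).descFactorial s : ℝ) /
        ((n + k - 1).descFactorial s : ℝ) := by
  have hsum : (∑ ℓ ∈ multisetTuples n k, ((sigmaEq ℓ).descFactorial s : ℝ))
      = ((s.factorial * ((k - 1).choose s * (n + (k - s) - 1).choose (k - s)) : ℕ) : ℝ) := by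
    rw [← Nat.cast_sum, sum_descFactorial n k s hn hk]
  rw [hsum]
  by_cases hcase : k ≤ s
  · rw [Nat.choose_eq_zero_of_lt (by omega : k - 1 < s),
      Nat.descFactorial_eq_zero_iff_lt.mpr (by omega : k - 1 < s)]
    simp
  · push_neg at hcase
    set N := n + k - 1 with hN
    have hkN : k ≤ N := by omega
    have hsN : s ≤ N := by omega
    have hC : ((N.choose k : ℕ) : ℝ) ≠ 0 :=
      Nat.cast_ne_zero.mpr (Nat.choose_pos hkN).ne'
    have hD : ((N.descFactorial s : ℕ) : ℝ) ≠ 0 := by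
      rw [Nat.cast_ne_zero]
      intro h
      rw [Nat.descFactorial_eq_zero_iff_lt] at h
      omega
    -- the nat identity
    have e1 := Nat.choose_mul_factorial_mul_factorial (show k - s ≤ N - s by omega)
    rw [show N - s - (k - s) = n - 1 by omega] at e1
    have e2 := Nat.factorial_mul_descFactorial hsN
    have e3 := Nat.factorial_mul_descFactorial (show s ≤ k by omega)
    have e4 := Nat.choose_mul_factorial_mul_factorial hkN
    rw [show N - k = n - 1 by omega] at e4
    have pos : 0 < (k - s).factorial * (n - 1).factorial :=
      Nat.mul_pos (Nat.factorial_pos _) (Nat.factorial_pos _)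
    have id1 : (N - s).choose (k - s) * N.descFactorial s
        = k.descFactorial s * N.choose k := by
      apply Nat.eq_of_mul_eq_mul_right pos
      calc (N - s).choose (k - s) * N.descFactorial s * ((k - s).factorial * (n - 1).factorial)
          = ((N - s).choose (k - s) * (k - s).factorial * (n - 1).factorial) *
              N.descFactorial s := by ring
        _ = (N - s).factorial * N.descFactorial s := by rw [e1]
        _ = N.factorial := e2
        _ = N.choose k * k.factorial * (n - 1).factorial := e4.symm
        _ = N.choose k * ((k - s).factorial * k.descFactorial s) * (n - 1).factorial := by
            rw [e3]
        _ = k.descFactorial s * N.choose k * ((k - s).factorial * (n - 1).factorial) := by ring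
    have idfull : s.factorial * ((k - 1).choose s * (N - s).choose (k - s)) * N.descFactorial s
        = k.descFactorial s * (k - 1).descFactorial s * N.choose k := by
      rw [Nat.descFactorial_eq_factorial_mul_choose (k - 1) s]
      calc s.factorial * ((k - 1).choose s * (N - s).choose (k - s)) * N.descFactorial s
          = (s.factorial * (k - 1).choose s) *
              ((N - s).choose (k - s) * N.descFactorial s) := by ring
        _ = (s.factorial * (k - 1).choose s) * (k.descFactorial s * N.choose k) := by rw [id1]
        _ = k.descFactorial s * (s.factorial * (k - 1).choose s) * N.choose k := by ring
    rw [show n + (k - s) - 1 = N - s by omega]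
    rw [div_eq_div_iff hC hD]
    exact_mod_cast idfull
end

section
/- The expected number of adjacent equalities in a uniformly random k-multiset of {1,...,n} equals k(k-1)/(n+k-1), and its variance equals k(k-1)n(n-1)/((n+k-1)^2(n+k-2)). -/
open Finset

lemma mem_mT {n k : ℕ} {ℓ : Fin k → ℕ} :
    ℓ ∈ multisetTuples n k ↔
      (∀ i, 1 ≤ ℓ i ∧ ℓ i ≤ n) ∧ ∀ i j : Fin k, i ≤ j → ℓ j ≤ ℓ i := by
  simp [multisetTuples, Fintype.mem_piFinset, Finset.mem_Icc, Finset.mem_filter]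

lemma card_mT (n k : ℕ) : (multisetTuples n k).card = (n + k - 1).choose k := by
  induction k generalizing n with
  | zero =>
    rw [Nat.choose_zero_right]
    rw [Finset.card_eq_one]
    refine ⟨fun i => i.elim0, ?_⟩
    ext ℓ
    simp only [mem_mT, Finset.mem_singleton]
    constructor
    · intro _; funext i; exact i.elim0
    · intro h; subst h; exact ⟨fun i => i.elim0, fun i j _ => le_refl _⟩
  | succ k ih =>
    rcases Nat.eq_zero_or_pos n with rfl | hn
    · rw [Finset.card_eq_zero.mpr, Nat.choose_eq_zero_of_lt (by omega)]
      ext ℓ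
      simp only [mem_mT, Finset.notMem_empty, iff_false, not_and]
      intro hb
      exact fun _ => absurd ((hb 0).1.trans (hb 0).2) (by omega)
    have hstep : (multisetTuples n (k+1)).card = ∑ v ∈ Icc 1 n, (multisetTuples v k).card := by
      rw [← Finset.card_sigma]
      refine Finset.card_nbij' (i := fun ℓ => ⟨ℓ 0, Fin.tail ℓ⟩)
        (j := fun p => Fin.cons p.1 p.2) ?_ ?_ ?_ ?_
      · intro ℓ hℓ
        rw [Finset.mem_coe, mem_mT] at hℓ
        obtain ⟨hb, hmono⟩ := hℓ
        rw [Finset.mem_coe, Finset.mem_sigma]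
        constructor
        · rw [Finset.mem_Icc]; exact ⟨(hb 0).1, (hb 0).2⟩
        · rw [mem_mT]
          refine ⟨fun i => ⟨(hb i.succ).1, ?_⟩, fun i j hij => ?_⟩
          · exact hmono 0 i.succ (Fin.zero_le _)
          · exact hmono i.succ j.succ (by rw [Fin.le_def] at hij ⊢; simpa using hij)
      · rintro ⟨v, t⟩ hp
        rw [Finset.mem_coe, Finset.mem_sigma, Finset.mem_Icc, mem_mT] at hp
        obtain ⟨⟨hv1, hvn⟩, ⟨hb, hmono⟩⟩ := hp
        simp only at hv1 hvn hb hmono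
        rw [Finset.mem_coe, mem_mT]
        dsimp only
        constructor
        · intro i
          rcases Fin.eq_zero_or_eq_succ i with hi | ⟨a, rfl⟩
          · subst hi; rw [Fin.cons_zero]; exact ⟨hv1, hvn⟩
          · rw [Fin.cons_succ]; exact ⟨(hb a).1, le_trans (hb a).2 hvn⟩
        · intro i j hij
          rcases Fin.eq_zero_or_eq_succ i with hi | ⟨a, rfl⟩ <;>
            rcases Fin.eq_zero_or_eq_succ j with hj | ⟨b, rfl⟩
          · subst hi; subst hj; exact le_refl _
          · subst hi; rw [Fin.cons_zero, Fin.cons_succ]; exact (hb b).2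
          · subst hj; exact absurd hij (by simp [Fin.le_def])
          · rw [Fin.cons_succ, Fin.cons_succ]
            exact hmono a b (by rw [Fin.le_def] at hij ⊢; simpa using hij)
      · intro ℓ _; exact Fin.cons_self_tail ℓ
      · rintro ⟨v, t⟩ _; simp
    rw [hstep]
    have : ∀ v ∈ Icc 1 n, (multisetTuples v k).card = (v + k - 1).choose k :=
      fun v _ => ih v
    rw [Finset.sum_congr rfl this]
    have hre : ∑ v ∈ Icc 1 n, (v + k - 1).choose k = ∑ j ∈ Icc k (n + k - 1), j.choose k := by
      refine Finset.sum_nbij' (i := fun v => v + k - 1) (j := fun j => j - k + 1)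
        ?_ ?_ ?_ ?_ ?_
      · intro v hv; simp only [Finset.mem_Icc] at hv ⊢; omega
      · intro j hj; simp only [Finset.mem_Icc] at hj ⊢; omega
      · intro v hv; simp only [Finset.mem_Icc] at hv; omega
      · intro j hj; simp only [Finset.mem_Icc] at hj; omega
      · intro v hv; rfl
    rw [hre, Nat.sum_Icc_choose]
    congr 1
    omega

lemma sigmaEq_eq {k : ℕ} (ℓ : Fin (k+1) → ℕ) :
    sigmaEq ℓ = (Finset.univ.filter fun m : Fin k => ℓ m.castSucc = ℓ m.succ).card := by
  unfold sigmaEq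
  refine Finset.card_bij (fun p hp => ⟨(p.1 : ℕ), by
      simp only [Finset.mem_filter, Finset.mem_univ, true_and] at hp
      have := p.2.isLt; omega⟩) ?_ ?_ ?_
  · intro p hp
    have hp' := hp
    simp only [Finset.mem_filter, Finset.mem_univ, true_and] at hp' ⊢
    obtain ⟨h1, h2⟩ := hp'
    have e1 : ℓ (Fin.castSucc ⟨(p.1 : ℕ), by have := p.2.isLt; omega⟩) = ℓ p.1 := by
      rfl
    have e2 : ℓ (Fin.succ ⟨(p.1 : ℕ), by have := p.2.isLt; omega⟩) = ℓ p.2 := by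
      congr 1; apply Fin.ext; simp [h1]
    rw [e1, e2]; exact h2
  · intro p hp q hq h
    simp only [Finset.mem_filter, Finset.mem_univ, true_and] at hp hq
    rw [Fin.mk.injEq] at h
    have h2 : (p.2 : ℕ) = (q.2 : ℕ) := by omega
    exact Prod.ext (Fin.ext h) (Fin.ext h2)
  · intro m hm
    simp only [Finset.mem_filter, Finset.mem_univ, true_and] at hm
    refine ⟨(m.castSucc, m.succ), ?_, ?_⟩
    · simp only [Finset.mem_filter, Finset.mem_univ, true_and]
      exact ⟨by simp, hm⟩
    · apply Fin.ext; simp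

/-- delete coordinate `m+1` -/
def delT (m : ℕ) {k : ℕ} (ℓ : Fin (k+1) → ℕ) : Fin k → ℕ :=
  fun i => if i.val ≤ m then ℓ i.castSucc else ℓ i.succ

/-- duplicate coordinate `m` -/
def insT (m : ℕ) {k : ℕ} (hm : m < k) (ℓ : Fin k → ℕ) : Fin (k+1) → ℕ :=
  fun i => if h : i.val ≤ m then ℓ ⟨i.val, lt_of_le_of_lt h hm⟩
           else ℓ ⟨i.val - 1, by have := i.isLt; omega⟩

lemma delT_apply_le {k m : ℕ} (ℓ : Fin (k+1) → ℕ) (i : Fin k) (h : i.val ≤ m) :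
    delT m ℓ i = ℓ i.castSucc := if_pos h

lemma delT_apply_gt {k m : ℕ} (ℓ : Fin (k+1) → ℕ) (i : Fin k) (h : ¬ i.val ≤ m) :
    delT m ℓ i = ℓ i.succ := if_neg h

lemma insT_apply_le {k m : ℕ} (hm : m < k) (ℓ : Fin k → ℕ) (i : Fin (k+1)) (h : i.val ≤ m) :
    insT m hm ℓ i = ℓ ⟨i.val, lt_of_le_of_lt h hm⟩ := dif_pos h

lemma insT_apply_gt {k m : ℕ} (hm : m < k) (ℓ : Fin k → ℕ) (i : Fin (k+1)) (h : ¬ i.val ≤ m) :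
    insT m hm ℓ i = ℓ ⟨i.val - 1, by have := i.isLt; omega⟩ := dif_neg h

lemma delT_mem {n k m : ℕ} {ℓ : Fin (k+1) → ℕ} (hℓ : ℓ ∈ multisetTuples n (k+1)) :
    delT m ℓ ∈ multisetTuples n k := by
  rw [mem_mT] at hℓ ⊢
  obtain ⟨hb, hmono⟩ := hℓ
  constructor
  · intro i; unfold delT; split
    · exact hb _
    · exact hb _
  · intro i j hij
    have hij' : i.val ≤ j.val := hij
    unfold delT
    split <;> split <;>
      refine hmono _ _ ?_ <;>
      · simp only [Fin.le_def, Fin.coe_castSucc, Fin.val_succ]; omega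

lemma insT_mem {n k m : ℕ} (hm : m < k) {ℓ : Fin k → ℕ} (hℓ : ℓ ∈ multisetTuples n k) :
    insT m hm ℓ ∈ multisetTuples n (k+1) := by
  rw [mem_mT] at hℓ ⊢
  obtain ⟨hb, hmono⟩ := hℓ
  constructor
  · intro i; unfold insT; split
    · exact hb _
    · exact hb _
  · intro i j hij
    have hij' : i.val ≤ j.val := hij
    unfold insT
    split <;> split <;>
      refine hmono _ _ ?_ <;>
      · simp only [Fin.le_def]; omega

lemma delT_low {k m : ℕ} (ℓ : Fin (k+1) → ℕ) {a : ℕ} (ha : a < k) (ham : a ≤ m) :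
    delT m ℓ ⟨a, ha⟩ = ℓ ⟨a, by omega⟩ :=
  (delT_apply_le ℓ _ ham).trans (congrArg ℓ (Fin.ext rfl))

lemma insT_low {k m : ℕ} (hm : m < k) (ℓ : Fin k → ℕ) {a : ℕ} (ha : a < k + 1) (ham : a ≤ m) :
    insT m hm ℓ ⟨a, ha⟩ = ℓ ⟨a, by omega⟩ :=
  insT_apply_le hm ℓ _ ham

lemma insT_constraint {k m : ℕ} (hm : m < k) (ℓ : Fin k → ℕ) :
    insT m hm ℓ ⟨m, by omega⟩ = insT m hm ℓ ⟨m+1, by omega⟩ := by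
  rw [insT_apply_le hm ℓ _ (le_refl m),
    insT_apply_gt hm ℓ _ (show ¬ (m + 1 ≤ m) by omega)]
  exact congrArg ℓ (Fin.ext (show m = m + 1 - 1 by omega))

lemma insT_delT {k m : ℕ} (hm : m < k) (ℓ : Fin (k+1) → ℕ)
    (hc : ℓ ⟨m, by omega⟩ = ℓ ⟨m+1, by omega⟩) : insT m hm (delT m ℓ) = ℓ := by
  funext i
  rcases Nat.lt_trichotomy i.val (m+1) with h | h | h
  · rw [insT_apply_le hm _ i (by omega),
      delT_apply_le ℓ _ (show i.val ≤ m by omega)]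
    exact congrArg ℓ (Fin.ext rfl)
  · rw [insT_apply_gt hm _ i (by omega),
      delT_apply_le ℓ _ (show i.val - 1 ≤ m by omega)]
    have e1 : ℓ (Fin.castSucc ⟨i.val - 1, by omega⟩) = ℓ ⟨m, by omega⟩ :=
      congrArg ℓ (Fin.ext (show i.val - 1 = m by omega))
    rw [e1, hc]
    exact congrArg ℓ (Fin.ext (show m + 1 = i.val by omega))
  · rw [insT_apply_gt hm _ i (by omega),
      delT_apply_gt ℓ _ (show ¬ (i.val - 1 ≤ m) by omega)]
    exact congrArg ℓ (Fin.ext (show i.val - 1 + 1 = i.val by omega))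

lemma delT_insT {k m : ℕ} (hm : m < k) (ℓ : Fin k → ℕ) : delT m (insT m hm ℓ) = ℓ := by
  funext i
  by_cases h : i.val ≤ m
  · rw [delT_apply_le _ _ h, insT_apply_le hm _ _ (show (Fin.castSucc i).val ≤ m from h)]
    exact congrArg ℓ (Fin.ext rfl)
  · rw [delT_apply_gt _ _ h,
      insT_apply_gt hm _ _ (show ¬ ((Fin.succ i).val ≤ m) from by
        rw [Fin.val_succ]; omega)]
    exact congrArg ℓ (Fin.ext (show i.val + 1 - 1 = i.val by omega))

lemma cardA (n k m : ℕ) (hm : m < k) :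
    ((multisetTuples n (k+1)).filter
        fun ℓ => ℓ ⟨m, by omega⟩ = ℓ ⟨m+1, by omega⟩).card
      = (multisetTuples n k).card := by
  refine Finset.card_nbij' (i := delT m) (j := insT m hm) ?_ ?_ ?_ ?_
  · intro ℓ hℓ; rw [Finset.mem_coe, Finset.mem_filter] at hℓ; exact delT_mem hℓ.1
  · intro t ht; rw [Finset.mem_coe, Finset.mem_filter]
    exact ⟨insT_mem hm ht, insT_constraint hm t⟩
  · intro ℓ hℓ; rw [Finset.mem_coe, Finset.mem_filter] at hℓ; exact insT_delT hm ℓ hℓ.2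
  · intro t _; exact delT_insT hm t

lemma cardB1 (n k m m' : ℕ) (hmm : m < m') (hm' : m' < k+1) :
    ((multisetTuples n (k+2)).filter fun ℓ =>
        (ℓ ⟨m, by omega⟩ = ℓ ⟨m+1, by omega⟩) ∧
        (ℓ ⟨m', by omega⟩ = ℓ ⟨m'+1, by omega⟩)).card
    = ((multisetTuples n (k+1)).filter fun ℓ =>
        ℓ ⟨m, by omega⟩ = ℓ ⟨m+1, by omega⟩).card := by
  refine Finset.card_nbij' (i := delT m') (j := insT m' hm') ?_ ?_ ?_ ?_
  · intro ℓ hℓ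
    rw [Finset.mem_coe, Finset.mem_filter] at hℓ ⊢
    obtain ⟨hT, hlow, hhigh⟩ := hℓ
    refine ⟨delT_mem hT, ?_⟩
    rw [delT_low (m := m') ℓ (by omega) (by omega),
        delT_low (m := m') ℓ (by omega) (by omega)]
    exact hlow
  · intro t ht
    rw [Finset.mem_coe, Finset.mem_filter] at ht ⊢
    refine ⟨insT_mem hm' ht.1, ?_, insT_constraint hm' t⟩
    rw [insT_low hm' t (by omega) (by omega), insT_low hm' t (by omega) (by omega)]
    exact ht.2
  · intro ℓ hℓ; rw [Finset.mem_coe, Finset.mem_filter] at hℓ; exact insT_delT hm' ℓ hℓ.2.2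
  · intro t _; exact delT_insT hm' t

lemma cardB (n k m m' : ℕ) (hmm : m < m') (hm' : m' < k+1) :
    ((multisetTuples n (k+2)).filter fun ℓ =>
        (ℓ ⟨m, by omega⟩ = ℓ ⟨m+1, by omega⟩) ∧
        (ℓ ⟨m', by omega⟩ = ℓ ⟨m'+1, by omega⟩)).card
    = (multisetTuples n k).card := by
  rw [cardB1 n k m m' hmm hm']
  exact cardA n k m (by omega)

theorem sigma_mean_and_variance (n k : ℕ) (hn : 1 ≤ n) (hk : 1 ≤ k) :
    (∑ ℓ ∈ multisetTuples n k, (sigmaEq ℓ : ℝ)) / ((n + k - 1).choose k : ℝ) =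
      (k : ℝ) * ((k : ℝ) - 1) / ((n : ℝ) + (k : ℝ) - 1) ∧
    (∑ ℓ ∈ multisetTuples n k, (sigmaEq ℓ : ℝ) ^ 2) / ((n + k - 1).choose k : ℝ) -
        ((k : ℝ) * ((k : ℝ) - 1) / ((n : ℝ) + (k : ℝ) - 1)) ^ 2 =
      (k : ℝ) * ((k : ℝ) - 1) * (n : ℝ) * ((n : ℝ) - 1) /
        (((n : ℝ) + (k : ℝ) - 1) ^ 2 * ((n : ℝ) + (k : ℝ) - 2)) := by
  rcases k with _ | _ | K
  · omega
  · -- k = 1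
    have hz : ∀ ℓ : Fin 1 → ℕ, sigmaEq ℓ = 0 := by
      intro ℓ
      unfold sigmaEq
      rw [Finset.card_eq_zero, Finset.filter_eq_empty_iff]
      intro p _
      rintro ⟨h, -⟩
      have h1 := p.1.isLt
      have h2 := p.2.isLt
      omega
    simp only [hz, Nat.cast_zero, Finset.sum_const_zero, ne_eq]
    norm_num
  · -- k = K + 2
    set K2 := K + 2 with hK2
    -- the constraint-counting identities
    have hS1 : (∑ ℓ ∈ multisetTuples n (K+2), sigmaEq ℓ)
        = (K+1) * (multisetTuples n (K+1)).card := by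
      have h1 : ∀ ℓ ∈ multisetTuples n (K+2), sigmaEq ℓ
          = ∑ m : Fin (K+1), if ℓ m.castSucc = ℓ m.succ then 1 else 0 := by
        intro ℓ _
        rw [sigmaEq_eq, Finset.card_filter]
      rw [Finset.sum_congr rfl h1, Finset.sum_comm]
      have h2 : ∀ m : Fin (K+1),
          (∑ ℓ ∈ multisetTuples n (K+2), if ℓ m.castSucc = ℓ m.succ then 1 else 0)
            = (multisetTuples n (K+1)).card := by
        intro m
        rw [← Finset.card_filter]
        exact cardA n (K+1) m.val m.isLt
      rw [Finset.sum_congr rfl fun m _ => h2 m, Finset.sum_const, Finset.card_univ,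
        Fintype.card_fin, smul_eq_mul]
    have h3 : ∀ m m' : Fin (K+1),
        ((multisetTuples n (K+2)).filter fun ℓ =>
            (ℓ m.castSucc = ℓ m.succ) ∧ (ℓ m'.castSucc = ℓ m'.succ)).card
          = if m = m' then (multisetTuples n (K+1)).card else (multisetTuples n K).card := by
      intro m m'
      rcases Nat.lt_trichotomy m.val m'.val with h | h | h
      · rw [if_neg (by intro e; subst e; omega)]
        exact cardB n K m.val m'.val h m'.isLt
      · rw [if_pos (Fin.ext h)]
        have e : m = m' := Fin.ext h
        subst e
        rw [show ((multisetTuples n (K+2)).filter fun ℓ =>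
            (ℓ m.castSucc = ℓ m.succ) ∧ (ℓ m.castSucc = ℓ m.succ))
          = ((multisetTuples n (K+2)).filter fun ℓ => ℓ m.castSucc = ℓ m.succ) from by
            apply Finset.filter_congr; intro ℓ _; simp]
        exact cardA n (K+1) m.val m.isLt
      · rw [if_neg (by intro e; subst e; omega)]
        rw [show ((multisetTuples n (K+2)).filter fun ℓ =>
            (ℓ m.castSucc = ℓ m.succ) ∧ (ℓ m'.castSucc = ℓ m'.succ))
          = ((multisetTuples n (K+2)).filter fun ℓ =>
            (ℓ m'.castSucc = ℓ m'.succ) ∧ (ℓ m.castSucc = ℓ m.succ)) from by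
            apply Finset.filter_congr; intro ℓ _; simp [and_comm]]
        exact cardB n K m'.val m.val h m.isLt
    have hS2 : (∑ ℓ ∈ multisetTuples n (K+2), (sigmaEq ℓ)^2)
        = (K+1) * (multisetTuples n (K+1)).card + ((K+1)*K) * (multisetTuples n K).card := by
      have h1 : ∀ ℓ ∈ multisetTuples n (K+2), (sigmaEq ℓ)^2
          = ∑ m : Fin (K+1), ∑ m' : Fin (K+1),
              if (ℓ m.castSucc = ℓ m.succ) ∧ (ℓ m'.castSucc = ℓ m'.succ) then 1 else 0 := by
        intro ℓ _
        rw [sigmaEq_eq, Finset.card_filter, sq, Finset.sum_mul_sum]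
        refine Finset.sum_congr rfl fun m _ => Finset.sum_congr rfl fun m' _ => ?_
        by_cases hA : ℓ m.castSucc = ℓ m.succ <;> by_cases hB : ℓ m'.castSucc = ℓ m'.succ <;>
          simp [hA, hB]
      rw [Finset.sum_congr rfl h1, Finset.sum_comm]
      have h2 : ∀ m : Fin (K+1),
          (∑ ℓ ∈ multisetTuples n (K+2), ∑ m' : Fin (K+1),
            if (ℓ m.castSucc = ℓ m.succ) ∧ (ℓ m'.castSucc = ℓ m'.succ) then 1 else 0)
          = (multisetTuples n (K+1)).card + K * (multisetTuples n K).card := by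
        intro m
        rw [Finset.sum_comm]
        have h4 : ∀ m' : Fin (K+1),
            (∑ ℓ ∈ multisetTuples n (K+2),
              if (ℓ m.castSucc = ℓ m.succ) ∧ (ℓ m'.castSucc = ℓ m'.succ) then 1 else 0)
            = if m = m' then (multisetTuples n (K+1)).card else (multisetTuples n K).card := by
          intro m'
          rw [← Finset.card_filter]
          exact h3 m m'
        rw [Finset.sum_congr rfl fun m' _ => h4 m']
        rw [← Finset.add_sum_erase _ _ (Finset.mem_univ m), if_pos rfl]
        congr 1
        rw [Finset.sum_congr rfl (fun m' hm' => by
          rw [if_neg (by rintro e; subst e; exact (Finset.mem_erase.mp hm').1 rfl)]),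
          Finset.sum_const, Finset.card_erase_of_mem (Finset.mem_univ m),
          Finset.card_univ, Fintype.card_fin, smul_eq_mul]
        simp
      rw [Finset.sum_congr rfl fun m _ => h2 m, Finset.sum_const, Finset.card_univ,
        Fintype.card_fin, smul_eq_mul]
      ring
    -- arithmetic relations between the cardinalities
    have hR1 : (n+K+1) * (multisetTuples n (K+1)).card
        = (multisetTuples n (K+2)).card * (K+2) := by
      rw [card_mT, card_mT, show n+(K+1)-1 = n+K by omega, show n+(K+2)-1 = n+K+1 by omega]
      exact Nat.add_one_mul_choose_eq (n+K) (K+1)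
    have hR2 : (n+K) * (multisetTuples n K).card
        = (multisetTuples n (K+1)).card * (K+1) := by
      rw [card_mT, card_mT, show n+(K+1)-1 = n+K by omega]
      have := Nat.add_one_mul_choose_eq (n+K-1) K
      rw [show n+K-1+1 = n+K by omega] at this
      exact this
    have hpos : 0 < (multisetTuples n (K+2)).card := by
      rw [card_mT]; exact Nat.choose_pos (by omega)
    -- pass to the reals
    have hN0 : (0:ℝ) < ((multisetTuples n (K+2)).card : ℝ) := by exact_mod_cast hpos
    have ha : ((n:ℝ)+K+1) ≠ 0 := by positivity
    have hb : ((n:ℝ)+K) ≠ 0 := by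
      have : (1:ℝ) ≤ (n:ℝ) := by exact_mod_cast hn
      positivity
    have h1R : ((n:ℝ)+K+1) * ((multisetTuples n (K+1)).card : ℝ)
        = ((multisetTuples n (K+2)).card : ℝ) * ((K:ℝ)+2) := by exact_mod_cast hR1
    have h2R : ((n:ℝ)+K) * ((multisetTuples n K).card : ℝ)
        = ((multisetTuples n (K+1)).card : ℝ) * ((K:ℝ)+1) := by exact_mod_cast hR2
    have eN1 : ((multisetTuples n (K+1)).card : ℝ)
        = ((K:ℝ)+2) * ((multisetTuples n (K+2)).card : ℝ) / ((n:ℝ)+K+1) := by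
      rw [eq_div_iff ha]; linear_combination h1R
    have eN2 : ((multisetTuples n K).card : ℝ)
        = ((K:ℝ)+1) * ((multisetTuples n (K+1)).card : ℝ) / ((n:ℝ)+K) := by
      rw [eq_div_iff hb]; linear_combination h2R
    have hsum1 : (∑ ℓ ∈ multisetTuples n (K+2), (sigmaEq ℓ : ℝ))
        = (((K+1) * (multisetTuples n (K+1)).card : ℕ) : ℝ) := by
      rw [← hS1]; push_cast; rfl
    have hsum2 : (∑ ℓ ∈ multisetTuples n (K+2), (sigmaEq ℓ : ℝ)^2)
        = (((K+1) * (multisetTuples n (K+1)).card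
            + ((K+1)*K) * (multisetTuples n K).card : ℕ) : ℝ) := by
      rw [← hS2]; push_cast; rfl
    have hch : ((n + K2 - 1).choose K2 : ℝ) = ((multisetTuples n (K+2)).card : ℝ) := by
      rw [card_mT, hK2]
    have hb2 : ((n:ℝ)+K) > 0 := by
      have : (1:ℝ) ≤ (n:ℝ) := by exact_mod_cast hn
      positivity
    have ha2 : ((n:ℝ)+K+1) > 0 := by positivity
    have d1 : (n:ℝ) + ((K:ℝ)+1+1) - 1 = (n:ℝ)+(K:ℝ)+1 := by ring
    have d2 : (n:ℝ) + ((K:ℝ)+1+1) - 2 = (n:ℝ)+(K:ℝ) := by ring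
    constructor
    · rw [hsum1, hch, show K2 = K + 1 + 1 from rfl]
      push_cast
      rw [d1, eN1]
      field_simp [ha, hb, hN0.ne']
      ring
    · rw [hsum2, hch, show K2 = K + 1 + 1 from rfl]
      push_cast
      rw [d1, d2, eN2, eN1]
      field_simp [ha, hb, hN0.ne']
      ring
end
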